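/- arXiv:2506.18616 — 3 statements merged into one kernel-verified Lean document; each statement's English description precedes it below -/
import Mathlib

section
/- Let X be a set and S a ring of sets over X. Let μ be an additive content over S. If μ is continuous at the empty set — that is, for every non-increasing (for set inclusion) sequence (A_n) of elements of S with empty intersection, μ(A_n) tends to 0 as n → ∞ — then μ is σ-sub-additive: for every sequence (A_n) of elements of S whose union also belongs to S, μ(⋃_n A_n) ≤ ∑_n μ(A_n). -/
open MeasureTheory ProbabilityTheory Preorder Filter
open scoped ENNReal ProbabilityTheory Topology

/-- If an additive content over a ring of sets is continuous at the empty set, then it is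
σ-sub-additive. -/
theorem addContent_sigma_subadditive_of_tendsto_zero_empty {α : Type*} {C : Set (Set α)}
    (hC : IsSetRing C) (m : AddContent ℝ≥0∞ C)
    (hcont : ∀ A : ℕ → Set α, (∀ n, A n ∈ C) → Antitone A → (⋂ n, A n) = ∅ →
      Tendsto (fun n ↦ m (A n)) atTop (𝓝 0)) :
    ∀ A : ℕ → Set α, (∀ n, A n ∈ C) → (⋃ n, A n) ∈ C →
      m (⋃ n, A n) ≤ ∑' n, m (A n) := by
  intro A hA hU
  set U := ⋃ n, A n with hUdef
  set B : ℕ → Set α := fun n ↦ ⋃ i ∈ Finset.range (n + 1), A i with hB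
  have hBmem : ∀ n, B n ∈ C := fun n ↦ hC.biUnion_mem _ (fun i _ ↦ hA i)
  have hBsub : ∀ n, B n ⊆ U := by
    intro n x hx
    simp only [B, Set.mem_iUnion] at hx
    obtain ⟨i, _, hi⟩ := hx
    exact Set.mem_iUnion.2 ⟨i, hi⟩
  set D : ℕ → Set α := fun n ↦ U \ B n with hD
  have hDmem : ∀ n, D n ∈ C := fun n ↦ hC.sdiff_mem hU (hBmem n)
  have hDanti : Antitone D := by
    intro i j hij
    refine Set.diff_subset_diff_right ?_
    intro x hx
    simp only [B, Set.mem_iUnion] at hx ⊢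
    obtain ⟨k, hk, hkx⟩ := hx
    exact ⟨k, lt_of_lt_of_le (Finset.mem_range.1 hk) (by omega) |>.trans_le le_rfl
      |> Finset.mem_range.2, hkx⟩
  have hDinter : (⋂ n, D n) = ∅ := by
    ext x
    simp only [Set.mem_iInter, Set.mem_empty_iff_false, iff_false, not_forall]
    by_cases hxU : x ∈ U
    · obtain ⟨i, hi⟩ := Set.mem_iUnion.1 hxU
      exact ⟨i, fun h => h.2 (Set.mem_iUnion.2
        ⟨i, Set.mem_iUnion.2 ⟨Finset.mem_range.2 (Nat.lt_succ_self i), hi⟩⟩)⟩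
    · exact ⟨0, fun h => hxU h.1⟩
  have htend := hcont D hDmem hDanti hDinter
  have key : ∀ n, m U ≤ (∑' n, m (A n)) + m (D n) := by
    intro n
    have hsplit : U = B n ∪ D n := by
      rw [Set.union_diff_self, Set.union_eq_self_of_subset_left (hBsub n)]
    have hdisj : Disjoint (B n) (D n) := Set.disjoint_sdiff_right
    calc m U = m (B n) + m (D n) := by
          rw [hsplit]; exact addContent_union hC (hBmem n) (hDmem n) hdisj
      _ ≤ (∑ i ∈ Finset.range (n + 1), m (A i)) + m (D n) := by
          gcongr
          exact addContent_biUnion_le hC (fun i _ ↦ hA i)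
      _ ≤ (∑' n, m (A n)) + m (D n) := by
          gcongr
          exact ENNReal.sum_le_tsum _
  have hlim : Tendsto (fun n ↦ (∑' n, m (A n)) + m (D n)) atTop (𝓝 ((∑' n, m (A n)) + 0)) :=
    Tendsto.const_add _ htend
  rw [add_zero] at hlim
  exact ge_of_tendsto' hlim key
end

section
/- (Ionescu–Tulcea) Let (X_n, A_n)_{n∈ℕ} be a family of measurable spaces and (κ_n)_{n∈ℕ} a family of Markov kernels with κ_n a kernel from ∏_{i≤n} X_i to X_{n+1}. Then for every a ∈ ℕ there exists a Markov kernel ξ_a from ∏_{i≤a} X_i to ∏_{n∈ℕ} X_n such that for every b ∈ ℕ, the pushforward of ξ_a under the restriction map π_b : ∏_{n∈ℕ} X_n → ∏_{i≤b} X_i equals the partial-trajectory kernel η_{a,b}. -/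
open MeasureTheory ProbabilityTheory Preorder Filter
open scoped ENNReal ProbabilityTheory Topology

variable {X : ℕ → Type*} [∀ n, MeasurableSpace (X n)]

/-- Canonical map gluing a trajectory up to time `b` with a point of `X (b + 1)` into a
trajectory up to time `b + 1`. -/
def IicProdSucc (b : ℕ) (p : (Π i : Finset.Iic b, X i) × X (b + 1)) :
    Π i : Finset.Iic (b + 1), X i :=
  fun i ↦ if h : i.1 ≤ b then p.1 ⟨i.1, Finset.mem_Iic.2 h⟩
    else cast (congrArg X (Nat.le_antisymm (Finset.mem_Iic.1 i.2)
      (Nat.lt_of_not_le h))).symm p.2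

/-- The partial trajectory kernel `η_{a,b}` built from the kernels `κ n`: for `b ≤ a` it is the
deterministic kernel given by the restriction map, and `η_{a,b+1}` is obtained from `η_{a,b}` by
composing with the product of the identity kernel and `κ b`. -/
noncomputable def partialTraj (κ : ∀ n, Kernel (Π i : Finset.Iic n, X i) (X (n + 1))) (a : ℕ) :
    (b : ℕ) → Kernel (Π i : Finset.Iic a, X i) (Π i : Finset.Iic b, X i)
  | 0 => Kernel.deterministic (frestrictLe₂ (Nat.zero_le a)) (measurable_frestrictLe₂ _)
  | b + 1 =>
    if h : b + 1 ≤ a then Kernel.deterministic (frestrictLe₂ h) (measurable_frestrictLe₂ h)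
    else ((Kernel.id ×ₖ κ b) ∘ₖ partialTraj κ a b).map (IicProdSucc b)

set_option linter.unusedSectionVars false

open Set

lemma measurable_IicProdSucc (b : ℕ) : Measurable (IicProdSucc (X := X) b) := by
  refine measurable_pi_lambda _ (fun i => ?_)
  obtain ⟨i, hi⟩ := i
  by_cases h : i ≤ b
  · simp only [IicProdSucc, h, dite_true]
    exact (measurable_pi_apply _).comp measurable_fst
  · have hib : i = b + 1 := Nat.le_antisymm (Finset.mem_Iic.1 hi) (Nat.lt_of_not_le h)
    subst hib
    simp only [IicProdSucc, h, dite_false]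
    have : ∀ (e : X (b+1) = X (b+1)) (p : (Π i : Finset.Iic b, X i) × X (b + 1)),
        cast e p.2 = p.2 := fun e p => eq_of_heq (cast_heq _ _)
    simpa [this] using measurable_snd

lemma frestrictLe₂_IicProdSucc (b : ℕ) (p : (Π i : Finset.Iic b, X i) × X (b + 1)) :
    frestrictLe₂ (Nat.le_succ b) (IicProdSucc (X := X) b p) = p.1 := by
  funext i
  have h : i.1 ≤ b := Finset.mem_Iic.1 i.2
  simp only [frestrictLe₂, Finset.restrict₂, IicProdSucc, h, dite_true]

variable (κ : ∀ n, Kernel (Π i : Finset.Iic n, X i) (X (n + 1)))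

lemma partialTraj_le {a b : ℕ} (hba : b ≤ a) :
    partialTraj κ a b
      = Kernel.deterministic (frestrictLe₂ hba) (measurable_frestrictLe₂ hba) := by
  cases b with
  | zero => rfl
  | succ b => rw [partialTraj, dif_pos hba]

lemma partialTraj_succ_of_not_le {a b : ℕ} (h : ¬ (b + 1 ≤ a)) :
    partialTraj κ a (b + 1)
      = ((Kernel.id ×ₖ κ b) ∘ₖ partialTraj κ a b).map (IicProdSucc b) := by
  rw [partialTraj, dif_neg h]

lemma partialTraj_self (a : ℕ) : partialTraj κ a a = Kernel.id := by
  rw [partialTraj_le κ le_rfl]; rfl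

instance isMarkovKernel_partialTraj [∀ n, IsMarkovKernel (κ n)] (a b : ℕ) :
    IsMarkovKernel (partialTraj κ a b) := by
  induction b with
  | zero => rw [partialTraj]; infer_instance
  | succ b ih =>
    rw [partialTraj]
    split_ifs with h
    · infer_instance
    · exact Kernel.IsMarkovKernel.map _ (measurable_IicProdSucc b)

lemma Kernel.map_map' {α β γ δ : Type*} [MeasurableSpace α] [MeasurableSpace β]
    [MeasurableSpace γ] [MeasurableSpace δ]
    (κ : Kernel α β) {f : β → γ} {g : γ → δ} (hf : Measurable f)
    (hg : Measurable g) : (κ.map f).map g = κ.map (g ∘ f) := by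
  ext a s hs
  rw [Kernel.map_apply' _ hg _ hs, Kernel.map_apply' _ hf _ (hg hs),
    Kernel.map_apply' _ (hg.comp hf) _ hs, Set.preimage_comp]

variable [∀ n, IsMarkovKernel (κ n)]

lemma partialTraj_map_succ (a b : ℕ) :
    (partialTraj κ a (b + 1)).map (frestrictLe₂ (Nat.le_succ b)) = partialTraj κ a b := by
  by_cases h : b + 1 ≤ a
  · rw [partialTraj_le κ h, partialTraj_le κ (Nat.le_of_succ_le h),
      ← Kernel.deterministic_comp_eq_map, Kernel.deterministic_comp_deterministic]
    · rfl
    · exact measurable_frestrictLe₂ _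
  · rw [partialTraj_succ_of_not_le κ h,
      Kernel.map_map' _ (measurable_IicProdSucc b) (measurable_frestrictLe₂ _)]
    have : (frestrictLe₂ (π := X) (Nat.le_succ b)) ∘ (IicProdSucc b) = Prod.fst :=
      funext fun p => frestrictLe₂_IicProdSucc b p
    rw [this, ← Kernel.fst_eq, Kernel.fst_comp, Kernel.fst_prod, Kernel.id_comp]

lemma partialTraj_map_frestrictLe₂ (a : ℕ) {b c : ℕ} (hbc : b ≤ c) :
    (partialTraj κ a c).map (frestrictLe₂ hbc) = partialTraj κ a b := by
  induction c, hbc using Nat.le_induction with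
  | base =>
    have : frestrictLe₂ (π := X) (Nat.le_refl b) = id := rfl
    rw [show frestrictLe₂ (π := X) (Nat.le_refl b) = id from rfl, Kernel.map_id]
  | succ c hbc ih =>
    have hcomp : (frestrictLe₂ (π := X) hbc) ∘ (frestrictLe₂ (Nat.le_succ c))
        = frestrictLe₂ (Nat.le_succ_of_le hbc) := rfl
    rw [← hcomp, ← Kernel.map_map' _ (measurable_frestrictLe₂ _) (measurable_frestrictLe₂ _),
      partialTraj_map_succ, ih]

lemma partialTraj_comp {a b : ℕ} (hab : a ≤ b) (c : ℕ) :
    partialTraj κ b c ∘ₖ partialTraj κ a b = partialTraj κ a c := by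
  induction c with
  | zero =>
    rw [show partialTraj κ b 0 = Kernel.deterministic (frestrictLe₂ (Nat.zero_le b))
        (measurable_frestrictLe₂ _) from rfl,
      Kernel.deterministic_comp_eq_map, partialTraj_map_frestrictLe₂]
  | succ c ih =>
    by_cases h : c + 1 ≤ b
    · rw [partialTraj_le κ h, Kernel.deterministic_comp_eq_map,
        partialTraj_map_frestrictLe₂]
    · have h' : ¬ (c + 1 ≤ a) := fun h'' => h (h''.trans hab)
      rw [partialTraj_succ_of_not_le κ h, partialTraj_succ_of_not_le κ h',
        Kernel.map_comp, Kernel.comp_assoc, ih, ← Kernel.map_comp]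

lemma exists_le_of_le_lintegral {Z : Type*} [MeasurableSpace Z] (ν : Measure Z)
    [IsProbabilityMeasure ν] {g : Z → ℝ≥0∞} (hg : Measurable g)
    {ε : ℝ≥0∞} (hεg : ε ≤ ∫⁻ z, g z ∂ν) (hε0 : ε ≠ 0) (hε1 : ε ≤ 1) : ∃ z, ε ≤ g z := by
  by_contra hcon
  push_neg at hcon
  have hε_top : ε ≠ ∞ := fun h => by simp [h] at hε1
  -- cover by superlevel sets
  have hcover : (⋃ m : ℕ, {z | g z ≤ ε - ((m : ℝ≥0∞) + 1)⁻¹}) = univ := by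
    ext z
    simp only [mem_iUnion, mem_setOf_eq, mem_univ, iff_true]
    have hpos : 0 < ε - g z := tsub_pos_of_lt (hcon z)
    obtain ⟨m, hm⟩ := ENNReal.exists_inv_nat_lt hpos.ne'
    refine ⟨m, ?_⟩
    have h1 : ((m : ℝ≥0∞) + 1)⁻¹ ≤ ((m : ℝ≥0∞))⁻¹ := by
      gcongr; exact le_self_add
    have h2 : g z + ((m : ℝ≥0∞) + 1)⁻¹ ≤ ε := by
      calc g z + ((m : ℝ≥0∞) + 1)⁻¹ ≤ g z + (ε - g z) :=
            add_le_add_right (le_trans h1 hm.le) _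
        _ = ε := by rw [add_tsub_cancel_of_le (hcon z).le]
    exact ENNReal.le_sub_of_add_le_right (by simp) h2
  obtain ⟨m, hm⟩ : ∃ m : ℕ, ν {z | g z ≤ ε - ((m : ℝ≥0∞) + 1)⁻¹} ≠ 0 := by
    by_contra hall
    push_neg at hall
    have := measure_iUnion_null (s := fun m : ℕ => {z | g z ≤ ε - ((m : ℝ≥0∞) + 1)⁻¹}) hall
    rw [hcover] at this
    simp at this
  set δ : ℝ≥0∞ := ((m : ℝ≥0∞) + 1)⁻¹ with hδ
  have hδ0 : δ ≠ 0 := by simp [hδ]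
  set A := {z | g z ≤ ε - δ} with hA
  have hAm : MeasurableSet A := measurableSet_le hg measurable_const
  have hint : ∫⁻ z, g z ∂ν = ∫⁻ z in A, g z ∂ν + ∫⁻ z in Aᶜ, g z ∂ν :=
    (lintegral_add_compl _ hAm).symm
  have h1 : ∫⁻ z in A, g z ∂ν ≤ (ε - δ) * ν A := by
    calc ∫⁻ z in A, g z ∂ν ≤ ∫⁻ _ in A, (ε - δ) ∂ν :=
          setLIntegral_mono measurable_const (fun z hz => hz)
      _ = (ε - δ) * ν A := by rw [setLIntegral_const]
  have h2 : ∫⁻ z in Aᶜ, g z ∂ν ≤ ε * ν Aᶜ := by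
    calc ∫⁻ z in Aᶜ, g z ∂ν ≤ ∫⁻ _ in Aᶜ, ε ∂ν :=
          setLIntegral_mono measurable_const (fun z _ => (hcon z).le)
      _ = ε * ν Aᶜ := by rw [setLIntegral_const]
  have hAfin : ν A ≠ ∞ := (measure_lt_top ν A).ne
  have hlt : (ε - δ) * ν A < ε * ν A :=
    by rw [mul_comm _ (ν A), mul_comm ε]
       exact ENNReal.mul_lt_mul_right hm hAfin (ENNReal.sub_lt_self hε_top hε0 hδ0)
  have : ∫⁻ z, g z ∂ν < ε := by
    calc ∫⁻ z, g z ∂ν ≤ (ε - δ) * ν A + ε * ν Aᶜ := by rw [hint]; exact add_le_add h1 h2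
      _ < ε * ν A + ε * ν Aᶜ := by
          exact ENNReal.add_lt_add_right (by
            exact (lt_of_le_of_lt (mul_le_mul_right (measure_mono (subset_univ _)) ε)
              (by simpa using (lt_of_le_of_lt hε1 (by norm_num : (1:ℝ≥0∞) < ∞)))).ne) hlt
      _ = ε * (ν A + ν Aᶜ) := by rw [mul_add]
      _ = ε := by rw [measure_add_measure_compl hAm, measure_univ, mul_one]
  exact absurd hεg (not_le.2 this)

omit [∀ n, MeasurableSpace (X n)] in

lemma frestrictLe_surjective [∀ n, Nonempty (X n)] (N : ℕ) :
    Function.Surjective (frestrictLe (π := X) N) := by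
  intro y
  refine ⟨fun i => if h : i ∈ Finset.Iic N then y ⟨i, h⟩ else Classical.arbitrary _, ?_⟩
  funext i
  exact dif_pos i.2

lemma subset_of_preimage_subset {α β : Type*} {f : α → β} (hf : Function.Surjective f)
    {U V : Set β} (h : f ⁻¹' U ⊆ f ⁻¹' V) : U ⊆ V := fun u hu => by
  obtain ⟨w, rfl⟩ := hf u; exact h hu

variable [∀ n, IsMarkovKernel (κ n)]

lemma partialTraj_preimage {k N M : ℕ} (h : N ≤ M) (y : Π i : Finset.Iic k, X i)
    {T : Set (Π i : Finset.Iic N, X i)} (hT : MeasurableSet T) :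
    partialTraj κ k M y (frestrictLe₂ h ⁻¹' T) = partialTraj κ k N y T := by
  rw [← Kernel.map_apply' _ (measurable_frestrictLe₂ h) _ hT, partialTraj_map_frestrictLe₂]

lemma traj_key [∀ n, Nonempty (X n)] (a : ℕ) (x : Π i : Finset.Iic a, X i)
    (b : ℕ → ℕ) (S : ∀ n, Set (Π i : Finset.Iic (b n), X i)) (hS : ∀ n, MeasurableSet (S n))
    (hanti : Antitone fun n => frestrictLe (b n) ⁻¹' (S n))
    {ε : ℝ≥0∞} (hε0 : ε ≠ 0)
    (hε : ∀ n, ε ≤ partialTraj κ a (b n) x (S n)) :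
    (⋂ n, frestrictLe (b n) ⁻¹' (S n)).Nonempty := by
  classical
  have hε1 : ε ≤ 1 := (hε 0).trans prob_le_one
  set f : (n : ℕ) → (k : ℕ) → (Π i : Finset.Iic k, X i) → ℝ≥0∞ :=
    fun n k y => partialTraj κ k (b n) y (S n) with hfdef
  have hf_meas : ∀ n k, Measurable (f n k) := fun n k => Kernel.measurable_coe _ (hS n)
  have hf_anti : ∀ (k : ℕ) (y : Π i : Finset.Iic k, X i), Antitone fun n => f n k y := by
    intro k y
    refine antitone_nat_of_succ_le fun n => ?_
    set M := max (b n) (b (n + 1)) with hM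
    have hsub : frestrictLe₂ (le_max_right (b n) (b (n+1))) ⁻¹' S (n+1)
        ⊆ frestrictLe₂ (le_max_left (b n) (b (n+1))) ⁻¹' S n := by
      refine subset_of_preimage_subset (frestrictLe_surjective (X := X) M) ?_
      exact hanti (Nat.le_succ n)
    calc f (n+1) k y
        = partialTraj κ k M y (frestrictLe₂ (le_max_right _ _) ⁻¹' S (n+1)) :=
          (partialTraj_preimage κ _ y (hS (n+1))).symm
      _ ≤ partialTraj κ k M y (frestrictLe₂ (le_max_left _ _) ⁻¹' S n) := measure_mono hsub
      _ = f n k y := partialTraj_preimage κ _ y (hS n)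
  have htower : ∀ n k y, f n k y = ∫⁻ z, f n (k+1) (IicProdSucc k (y, z)) ∂(κ k y) := by
    intro n k y
    have h1 : f n k y = (partialTraj κ (k+1) (b n) ∘ₖ partialTraj κ k (k+1)) y (S n) := by
      rw [partialTraj_comp κ (Nat.le_succ k) (b n)]
    have h2 : partialTraj κ k (k+1) = (Kernel.id ×ₖ κ k).map (IicProdSucc k) := by
      rw [partialTraj_succ_of_not_le κ (by omega), partialTraj_self, Kernel.comp_id]
    have hc : Measurable fun p : (Π i : Finset.Iic k, X i) × X (k+1) =>
        f n (k+1) (IicProdSucc k p) := (hf_meas n (k+1)).comp (measurable_IicProdSucc k)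
    have hd : Measurable fun u : Π i : Finset.Iic k, X i =>
        ∫⁻ z, f n (k+1) (IicProdSucc k (u, z)) ∂(κ k y) :=
      Measurable.lintegral_prod_right (f := fun u z => f n (k+1) (IicProdSucc k (u, z))) hc
    rw [h1, Kernel.comp_apply' _ _ _ (hS n), h2,
      Kernel.map_apply _ (measurable_IicProdSucc k),
      lintegral_map (hf_meas n (k+1)) (measurable_IicProdSucc k),
      Kernel.prod_apply, Kernel.id_apply,
      MeasureTheory.lintegral_prod _ hc.aemeasurable,
      lintegral_dirac' _ hd]
  set l : (k : ℕ) → (Π i : Finset.Iic k, X i) → ℝ≥0∞ := fun k y => ⨅ n, f n k y with hldef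
  have hl_meas : ∀ k, Measurable (l k) := fun k => Measurable.iInf (fun n => hf_meas n k)
  have hl_tower : ∀ k y, l k y = ∫⁻ z, l (k+1) (IicProdSucc k (y, z)) ∂(κ k y) := by
    intro k y
    have hmg : ∀ n, Measurable fun z => f n (k+1) (IicProdSucc k (y, z)) := fun n =>
      (hf_meas n (k+1)).comp ((measurable_IicProdSucc k).comp measurable_prodMk_left)
    rw [hldef]
    simp only
    rw [lintegral_iInf hmg
      (fun n m hnm => fun z => hf_anti (k+1) (IicProdSucc k (y, z)) hnm)
      (by
        refine ne_top_of_le_ne_top (by simp : (1 : ℝ≥0∞) ≠ ⊤) ?_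
        calc ∫⁻ z, f 0 (k+1) (IicProdSucc k (y, z)) ∂(κ k y)
            ≤ ∫⁻ _, 1 ∂(κ k y) := lintegral_mono fun z => prob_le_one
          _ = 1 := by simp)]
    exact iInf_congr fun n => htower n k y
  have hstep : ∀ (k : ℕ) (y : Π i : Finset.Iic k, X i), ε ≤ l k y →
      ∃ z, ε ≤ l (k+1) (IicProdSucc k (y, z)) := by
    intro k y hy
    have hgm : Measurable fun z => l (k+1) (IicProdSucc k (y, z)) :=
      (hl_meas (k+1)).comp ((measurable_IicProdSucc k).comp measurable_prodMk_left)
    refine exists_le_of_le_lintegral (κ k y) hgm ?_ hε0 hε1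
    rw [← hl_tower k y]; exact hy
  choose! Z hZ using hstep
  set Y : (k : ℕ) → Π i : Finset.Iic (a + k), X i :=
    fun k => Nat.rec (motive := fun k => Π i : Finset.Iic (a + k), X i) x
      (fun k yk => IicProdSucc (a + k) (yk, Z (a + k) yk)) k with hYdef
  have hYsucc : ∀ k, Y (k+1) = IicProdSucc (a+k) (Y k, Z (a+k) (Y k)) := fun k => rfl
  have hYε : ∀ k, ε ≤ l (a + k) (Y k) := by
    intro k
    induction k with
    | zero => exact le_iInf fun n => hε n
    | succ k ih => exact hZ (a+k) (Y k) ih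
  have hagree : ∀ (k k' : ℕ) (hkk' : k ≤ k') (j : ℕ) (hj : j ≤ a + k),
      Y k' ⟨j, Finset.mem_Iic.2 (hj.trans (by omega))⟩ = Y k ⟨j, Finset.mem_Iic.2 hj⟩ := by
    intro k k' hkk'
    induction k', hkk' using Nat.le_induction with
    | base => intro j hj; rfl
    | succ k' hkk' ih =>
      intro j hj
      have h1 : Y (k'+1) ⟨j, Finset.mem_Iic.2 (hj.trans (by omega))⟩
          = Y k' ⟨j, Finset.mem_Iic.2 (hj.trans (by omega))⟩ :=
        congrFun (frestrictLe₂_IicProdSucc (a+k') (Y k', Z (a+k') (Y k')))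
          ⟨j, Finset.mem_Iic.2 (hj.trans (by omega))⟩
      exact h1.trans (ih j hj)
  set ω : Π n, X n := fun n => Y n ⟨n, Finset.mem_Iic.2 (Nat.le_add_left n a)⟩ with hω
  have hωY : ∀ (k j : ℕ) (hj : j ≤ a + k), ω j = Y k ⟨j, Finset.mem_Iic.2 hj⟩ := by
    intro k j hj
    rcases le_total j k with h | h
    · exact (hagree j k h j (Nat.le_add_left j a)).symm
    · exact (hagree k j h j hj).symm ▸ rfl
  refine ⟨ω, Set.mem_iInter.2 fun n => ?_⟩
  have h1 : ε ≤ l (a + b n) (Y (b n)) := hYε (b n)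
  have h2 : l (a + b n) (Y (b n)) ≤ f n (a + b n) (Y (b n)) := iInf_le _ n
  have h3 : f n (a + b n) (Y (b n))
      = (S n).indicator 1 (frestrictLe₂ (Nat.le_add_left (b n) a) (Y (b n))) := by
    rw [hfdef]
    simp only
    rw [partialTraj_le κ (Nat.le_add_left (b n) a), Kernel.deterministic_apply' _ _ (hS n)]
    rfl
  have hmem : frestrictLe₂ (Nat.le_add_left (b n) a) (Y (b n)) ∈ S n := by
    by_contra hm
    rw [h3, Set.indicator_of_notMem hm] at h2
    exact hε0 (le_antisymm ((h1.trans h2)) zero_le)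
  have heq : frestrictLe (b n) ω = frestrictLe₂ (Nat.le_add_left (b n) a) (Y (b n)) := by
    funext i
    exact hωY (b n) i.1 ((Finset.mem_Iic.1 i.2).trans (Nat.le_add_left (b n) a))
  show ω ∈ frestrictLe (b n) ⁻¹' S n
  rw [Set.mem_preimage, heq]
  exact hmem

section Content

variable (κ : ∀ n, Kernel (Π i : Finset.Iic n, X i) (X (n + 1))) (a : ℕ)
  [∀ n, IsMarkovKernel (κ n)]

/-- The value assigned to a cylinder-like set. -/
noncomputable def trajFun (x : Π i : Finset.Iic a, X i) (s : Set (Π n, X n)) : ℝ≥0∞ :=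
  ⨅ (N : ℕ) (S : Set (Π i : Finset.Iic N, X i)) (_ : MeasurableSet S)
    (_ : s = frestrictLe N ⁻¹' S), partialTraj κ a N x S

lemma trajFun_le (x : Π i : Finset.Iic a, X i) {N : ℕ} {S : Set (Π i : Finset.Iic N, X i)}
    (hS : MeasurableSet S) :
    trajFun κ a x (frestrictLe N ⁻¹' S) ≤ partialTraj κ a N x S :=
  iInf_le_of_le N <| iInf_le_of_le S <| iInf_le_of_le hS <| iInf_le _ rfl

lemma trajFun_eq [∀ n, Nonempty (X n)] (x : Π i : Finset.Iic a, X i) {N : ℕ}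
    {S : Set (Π i : Finset.Iic N, X i)} (hS : MeasurableSet S) :
    trajFun κ a x (frestrictLe N ⁻¹' S) = partialTraj κ a N x S := by
  refine le_antisymm (trajFun_le κ a x hS) ?_
  refine le_iInf fun M => le_iInf fun T => le_iInf fun hT => le_iInf fun heq => ?_
  -- heq : frestrictLe N ⁻¹' S = frestrictLe M ⁻¹' T
  rcases le_total N M with h | h
  · have h1 : frestrictLe (π := X) M ⁻¹' (frestrictLe₂ h ⁻¹' S) = frestrictLe M ⁻¹' T := heq
    have h2 : frestrictLe₂ (π := X) h ⁻¹' S = T :=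
      le_antisymm
        (subset_of_preimage_subset (frestrictLe_surjective M) h1.le)
        (subset_of_preimage_subset (frestrictLe_surjective M) h1.ge)
    rw [← h2, partialTraj_preimage κ h x hS]
  · have h1 : frestrictLe (π := X) N ⁻¹' (frestrictLe₂ h ⁻¹' T) = frestrictLe N ⁻¹' S := heq.symm
    have h2 : frestrictLe₂ (π := X) h ⁻¹' T = S :=
      le_antisymm
        (subset_of_preimage_subset (frestrictLe_surjective N) h1.le)
        (subset_of_preimage_subset (frestrictLe_surjective N) h1.ge)
    rw [← h2, partialTraj_preimage κ h x hT]

lemma trajFun_empty (x : Π i : Finset.Iic a, X i) : trajFun κ a x ∅ = 0 := by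
  refine le_antisymm ?_ zero_le
  refine le_trans (le_of_eq ?_) ((trajFun_le κ a x (MeasurableSet.empty
    (α := Π i : Finset.Iic 0, X i))).trans (by simp))
  rw [Set.preimage_empty]

lemma trajFun_subadd [∀ n, Nonempty (X n)] (x : Π i : Finset.Iic a, X i)
    {N : ℕ} {S : Set (Π i : Finset.Iic N, X i)} (hS : MeasurableSet S)
    (t : ℕ → Set (Π n, X n))
    (ht : ∀ n, ∃ (M : ℕ) (T : Set (Π i : Finset.Iic M, X i)),
      MeasurableSet T ∧ t n = frestrictLe M ⁻¹' T)
    (hsub : frestrictLe N ⁻¹' S ⊆ ⋃ n, t n) :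
    partialTraj κ a N x S ≤ ∑' n, trajFun κ a x (t n) := by
  classical
  choose c T hT hteq using ht
  set L : ℕ → ℕ := fun n => max N ((Finset.range (n+1)).sup c) with hL
  have hNL : ∀ n, N ≤ L n := fun n => le_max_left _ _
  have hcL : ∀ i n, i ≤ n → c i ≤ L n := fun i n h =>
    le_max_of_le_right (Finset.le_sup (Finset.mem_range.2 (by omega)))
  set S' : (n : ℕ) → Set (Π i : Finset.Iic (L n), X i) := fun n =>
    frestrictLe₂ (hNL n) ⁻¹' S \ ⋃ (i : ℕ) (h : i ≤ n), frestrictLe₂ (hcL i n h) ⁻¹' (T i)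
    with hS'
  have hS'm : ∀ n, MeasurableSet (S' n) := fun n =>
    ((measurable_frestrictLe₂ _) hS).diff
      (MeasurableSet.iUnion fun i => MeasurableSet.iUnion fun h =>
        (measurable_frestrictLe₂ _) (hT i))
  have hBrep : ∀ n, frestrictLe (L n) ⁻¹' S' n
      = frestrictLe N ⁻¹' S \ ⋃ (i : ℕ) (_ : i ≤ n), t i := by
    intro n
    rw [hS', Set.preimage_diff, Set.preimage_iUnion]
    congr 1
    refine Set.iUnion_congr fun i => ?_
    rw [Set.preimage_iUnion]
    exact Set.iUnion_congr fun h => (hteq i).symm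
  have hanti : Antitone fun n => frestrictLe (L n) ⁻¹' S' n := by
    intro m n hmn
    simp only
    rw [hBrep, hBrep]
    refine Set.diff_subset_diff_right ?_
    exact Set.iUnion_subset fun i => Set.iUnion_subset fun h z hz =>
      Set.mem_iUnion.2 ⟨i, Set.mem_iUnion.2 ⟨h.trans hmn, hz⟩⟩
  have hInter : (⋂ n, frestrictLe (L n) ⁻¹' S' n) = ∅ := by
    simp only [hBrep]
    ext g
    simp only [Set.mem_iInter, Set.mem_diff, Set.mem_iUnion, Set.mem_empty_iff_false, iff_false,
      not_forall]
    by_cases hgS : g ∈ frestrictLe N ⁻¹' S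
    · obtain ⟨i, hgi⟩ := Set.mem_iUnion.1 (hsub hgS)
      exact ⟨i, fun h => h.2 ⟨i, le_rfl, hgi⟩⟩
    · exact ⟨0, fun h => hgS h.1⟩
  have hzero : ⨅ n, partialTraj κ a (L n) x (S' n) = 0 := by
    by_contra h0
    have hpos : (⨅ n, partialTraj κ a (L n) x (S' n)) ≠ 0 := h0
    obtain ⟨g, hg⟩ := traj_key κ a x L S' hS'm hanti hpos (fun n => iInf_le _ n)
    rw [hInter] at hg
    exact hg
  have hbound : ∀ n, partialTraj κ a N x S
      ≤ (∑' i, trajFun κ a x (t i)) + partialTraj κ a (L n) x (S' n) := by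
    intro n
    have h1 : partialTraj κ a N x S
        = partialTraj κ a (L n) x (frestrictLe₂ (hNL n) ⁻¹' S) :=
      (partialTraj_preimage κ (hNL n) x hS).symm
    set U : Set (Π i : Finset.Iic (L n), X i) :=
      ⋃ (i : ℕ) (h : i ≤ n), frestrictLe₂ (hcL i n h) ⁻¹' (T i) with hU
    have h2 : frestrictLe₂ (hNL n) ⁻¹' S ⊆ U ∪ S' n := by
      intro z hz
      by_cases hh : z ∈ U
      · exact Or.inl hh
      · exact Or.inr ⟨hz, hh⟩
    have h3 : partialTraj κ a (L n) x U ≤ ∑' i, trajFun κ a x (t i) := by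
      refine le_trans (measure_iUnion_le _) (ENNReal.tsum_le_tsum fun i => ?_)
      by_cases hin : i ≤ n
      · have : (⋃ (_ : i ≤ n), frestrictLe₂ (hcL i n ‹_›) ⁻¹' (T i))
            = frestrictLe₂ (hcL i n hin) ⁻¹' (T i) := by
          simp [hin]
        rw [this, partialTraj_preimage κ (hcL i n hin) x (hT i), ← trajFun_eq κ a x (hT i),
          ← hteq i]
      · have : (⋃ (_ : i ≤ n), frestrictLe₂ (hcL i n ‹_›) ⁻¹' (T i)) = ∅ := by
          simp [hin]
        rw [this]
        simp
    calc partialTraj κ a N x S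
        ≤ partialTraj κ a (L n) x U + partialTraj κ a (L n) x (S' n) := by
          rw [h1]
          exact (measure_mono h2).trans (measure_union_le _ _)
      _ ≤ (∑' i, trajFun κ a x (t i)) + partialTraj κ a (L n) x (S' n) :=
          add_le_add_left h3 _
  calc partialTraj κ a N x S
      ≤ ⨅ n, ((∑' i, trajFun κ a x (t i)) + partialTraj κ a (L n) x (S' n)) :=
        le_iInf hbound
    _ = (∑' i, trajFun κ a x (t i)) + ⨅ n, partialTraj κ a (L n) x (S' n) :=
        ENNReal.add_iInf.symm
    _ = ∑' i, trajFun κ a x (t i) := by rw [hzero, add_zero]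

/-- The outer measure induced by `trajFun`. -/
noncomputable def trajOuter (x : Π i : Finset.Iic a, X i) : OuterMeasure (Π n, X n) :=
  OuterMeasure.ofFunction (trajFun κ a x) (trajFun_empty κ a x)

lemma trajOuter_eq [∀ n, Nonempty (X n)] (x : Π i : Finset.Iic a, X i) {N : ℕ}
    {S : Set (Π i : Finset.Iic N, X i)} (hS : MeasurableSet S) :
    trajOuter κ a x (frestrictLe N ⁻¹' S) = partialTraj κ a N x S := by
  refine le_antisymm ((OuterMeasure.ofFunction_le _).trans_eq (trajFun_eq κ a x hS)) ?_
  rw [trajOuter, OuterMeasure.ofFunction_apply]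
  refine le_iInf fun t => le_iInf fun hsub => ?_
  by_cases hC : ∀ n, ∃ (M : ℕ) (T : Set (Π i : Finset.Iic M, X i)),
      MeasurableSet T ∧ t n = frestrictLe M ⁻¹' T
  · exact trajFun_subadd κ a x hS t hC hsub
  · push_neg at hC
    obtain ⟨n₀, hn₀⟩ := hC
    have htop : trajFun κ a x (t n₀) = ⊤ := by
      rw [trajFun]
      refine iInf_eq_top.2 fun N' => iInf_eq_top.2 fun T => iInf_eq_top.2 fun hT =>
        iInf_eq_top.2 fun heq => absurd heq (hn₀ N' T hT)
    refine le_trans ?_ (ENNReal.le_tsum n₀)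
    rw [htop]
    exact le_top

lemma trajOuter_caratheodory (x : Π i : Finset.Iic a, X i) {N : ℕ}
    {S : Set (Π i : Finset.Iic N, X i)} (hS : MeasurableSet S) :
    MeasurableSet[(trajOuter κ a x).caratheodory] (frestrictLe N ⁻¹' S) := by
  refine OuterMeasure.ofFunction_caratheodory fun u => ?_
  refine le_iInf fun M => le_iInf fun T => le_iInf fun hT => le_iInf fun heq => ?_
  subst heq
  set P := max N M with hP
  have hNP : N ≤ P := le_max_left _ _
  have hMP : M ≤ P := le_max_right _ _
  have h1 : frestrictLe (π := X) M ⁻¹' T ∩ frestrictLe N ⁻¹' S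
      = frestrictLe P ⁻¹' (frestrictLe₂ hMP ⁻¹' T ∩ frestrictLe₂ hNP ⁻¹' S) := rfl
  have h2 : frestrictLe (π := X) M ⁻¹' T \ frestrictLe N ⁻¹' S
      = frestrictLe P ⁻¹' (frestrictLe₂ hMP ⁻¹' T \ frestrictLe₂ hNP ⁻¹' S) := rfl
  rw [h1, h2]
  calc trajFun κ a x (frestrictLe P ⁻¹' (frestrictLe₂ hMP ⁻¹' T ∩ frestrictLe₂ hNP ⁻¹' S))
        + trajFun κ a x (frestrictLe P ⁻¹' (frestrictLe₂ hMP ⁻¹' T \ frestrictLe₂ hNP ⁻¹' S))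
      ≤ partialTraj κ a P x (frestrictLe₂ hMP ⁻¹' T ∩ frestrictLe₂ hNP ⁻¹' S)
        + partialTraj κ a P x (frestrictLe₂ hMP ⁻¹' T \ frestrictLe₂ hNP ⁻¹' S) :=
        add_le_add
          (trajFun_le κ a x (((measurable_frestrictLe₂ _) hT).inter
            ((measurable_frestrictLe₂ _) hS)))
          (trajFun_le κ a x (((measurable_frestrictLe₂ _) hT).diff
            ((measurable_frestrictLe₂ _) hS)))
    _ = partialTraj κ a P x (frestrictLe₂ hMP ⁻¹' T) :=
        measure_inter_add_diff _ ((measurable_frestrictLe₂ _) hS)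
    _ = partialTraj κ a M x T := partialTraj_preimage κ hMP x hT

lemma exists_rep {s : Set (Π n, X n)} (hs : s ∈ measurableCylinders X) :
    ∃ (N : ℕ) (S : Set (Π i : Finset.Iic N, X i)), MeasurableSet S ∧ s = frestrictLe N ⁻¹' S := by
  obtain ⟨t, U, hU, rfl⟩ := (mem_measurableCylinders _).1 hs
  set N := t.sup id with hN
  have hsub : t ⊆ Finset.Iic N := fun i hi => Finset.mem_Iic.2 (Finset.le_sup (f := id) hi)
  exact ⟨N, Finset.restrict₂ hsub ⁻¹' U, (Finset.measurable_restrict₂ hsub) hU, rfl⟩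

/-- The trajectory measure. -/
noncomputable def trajMeasure (x : Π i : Finset.Iic a, X i) : Measure (Π n, X n) :=
  (trajOuter κ a x).toMeasure (by
    rw [← generateFrom_measurableCylinders]
    refine MeasurableSpace.generateFrom_le fun s hs => ?_
    obtain ⟨N, S, hS, rfl⟩ := exists_rep hs
    exact trajOuter_caratheodory κ a x hS)

lemma trajMeasure_apply [∀ n, Nonempty (X n)] (x : Π i : Finset.Iic a, X i) {N : ℕ}
    {S : Set (Π i : Finset.Iic N, X i)} (hS : MeasurableSet S) :
    trajMeasure κ a x (frestrictLe N ⁻¹' S) = partialTraj κ a N x S :=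
  (toMeasure_apply _ _ ((measurable_frestrictLe N) hS)).trans (trajOuter_eq κ a x hS)

instance [∀ n, Nonempty (X n)] (x : Π i : Finset.Iic a, X i) :
    IsProbabilityMeasure (trajMeasure κ a x) := by
  constructor
  have : (Set.univ : Set (Π n, X n)) = frestrictLe 0 ⁻¹' Set.univ := by simp
  rw [this, trajMeasure_apply κ a x MeasurableSet.univ]
  exact measure_univ

end Content

section MainHelpers

variable (κ : ∀ n, Kernel (Π i : Finset.Iic n, X i) (X (n + 1))) (a : ℕ)
  [∀ n, IsMarkovKernel (κ n)]

lemma measurable_trajMeasure [∀ n, Nonempty (X n)] {s : Set (Π n, X n)} (hs : MeasurableSet s) :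
    Measurable fun x : Π i : Finset.Iic a, X i => trajMeasure κ a x s := by
  refine MeasurableSpace.induction_on_inter
    (C := fun s _ => Measurable fun x : Π i : Finset.Iic a, X i => trajMeasure κ a x s)
    (s := measurableCylinders X)
    generateFrom_measurableCylinders.symm isPiSystem_measurableCylinders
    (by simpa using measurable_const) (fun t ht => ?basic) (fun t htm iht => ?compl)
    (fun g hdis hgm ihg => ?iUnion) _ hs
  case basic =>
    obtain ⟨N, S, hS, rfl⟩ := exists_rep (X := X) ht
    have : (fun x : Π i : Finset.Iic a, X i => trajMeasure κ a x (frestrictLe N ⁻¹' S))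
        = fun x => partialTraj κ a N x S := funext fun x => trajMeasure_apply κ a x hS
    show Measurable fun x : Π i : Finset.Iic a, X i => trajMeasure κ a x (frestrictLe N ⁻¹' S)
    rw [this]
    exact Kernel.measurable_coe _ hS
  case compl =>
    have : (fun x : Π i : Finset.Iic a, X i => trajMeasure κ a x tᶜ)
        = fun x => 1 - trajMeasure κ a x t := by
      funext x
      rw [measure_compl htm (measure_ne_top _ t), measure_univ]
    show Measurable fun x : Π i : Finset.Iic a, X i => trajMeasure κ a x tᶜ
    rw [this]
    exact Measurable.const_sub iht 1
  case iUnion =>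
    have : (fun x : Π i : Finset.Iic a, X i => trajMeasure κ a x (⋃ i, g i))
        = fun x => ∑' i, trajMeasure κ a x (g i) := by
      funext x
      exact measure_iUnion hdis hgm
    show Measurable fun x : Π i : Finset.Iic a, X i => trajMeasure κ a x (⋃ i, g i)
    rw [this]
    exact Measurable.ennreal_tsum ihg

end MainHelpers

/-- **Ionescu-Tulcea theorem**: there exists a Markov kernel `ξ_a` from `Π i : Iic a, X i` to
`Π n, X n` whose pushforward under each restriction map `π_b` is the partial trajectory
kernel `η_{a,b}`. -/
theorem ionescu_tulcea (κ : ∀ n, Kernel (Π i : Finset.Iic n, X i) (X (n + 1)))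
    [∀ n, IsMarkovKernel (κ n)] (a : ℕ) :
    ∃ ξ : Kernel (Π i : Finset.Iic a, X i) (Π n, X n), IsMarkovKernel ξ ∧
      ∀ b : ℕ, ξ.map (frestrictLe b) = partialTraj κ a b := by
  by_cases hne : Nonempty (Π i : Finset.Iic a, X i)
  · obtain ⟨x₀⟩ := hne
    have hX : ∀ n, Nonempty (X n) := by
      intro n
      induction n using Nat.strong_induction_on with
      | _ n ih =>
        rcases le_or_gt n a with h | h
        · exact ⟨x₀ ⟨n, Finset.mem_Iic.2 h⟩⟩
        · obtain ⟨m, rfl⟩ : ∃ m, n = m + 1 := ⟨n - 1, by omega⟩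
          have hPi : Nonempty (Π i : Finset.Iic m, X i) :=
            ⟨fun i => (ih i.1 (by have := Finset.mem_Iic.1 i.2; omega)).some⟩
          obtain ⟨y⟩ := hPi
          by_contra hemp
          rw [not_nonempty_iff] at hemp
          have h1 : (κ m y) Set.univ = 1 := measure_univ
          rw [Set.univ_eq_empty_iff.2 hemp, measure_empty] at h1
          simp at h1
    haveI := hX
    refine ⟨⟨fun x => trajMeasure κ a x, Measure.measurable_of_measurable_coe _
      fun s hs => measurable_trajMeasure κ a hs⟩, ⟨fun x => (inferInstance : IsProbabilityMeasure (trajMeasure κ a x))⟩, fun b => ?_⟩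
    ext x s hs
    rw [Kernel.map_apply' _ (measurable_frestrictLe b) _ hs]
    exact trajMeasure_apply κ a x hs
  · rw [not_nonempty_iff] at hne
    refine ⟨0, ⟨fun x => hne.elim x⟩, fun b => ?_⟩
    ext x
    exact hne.elim x
end

section
/- Let (X_n, A_n)_{n∈ℕ} be measurable spaces and (κ_n : ∏_{i≤n} X_i ⇝ X_{n+1})_{n∈ℕ} Markov kernels. For all a, b ∈ ℕ, the pushforward of the Ionescu–Tulcea trajectory kernel ξ_a : ∏_{i≤a} X_i ⇝ ∏_{n∈ℕ} X_n under the restriction map π_b : ∏_{n∈ℕ} X_n → ∏_{i≤b} X_i equals the partial-trajectory kernel η_{a,b}. -/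
open MeasureTheory ProbabilityTheory Preorder Filter
open scoped ENNReal ProbabilityTheory Topology

variable {X : ℕ → Type*} [∀ n, MeasurableSpace (X n)]

namespace ITAux
set_option linter.unusedSectionVars false

lemma measurable_iicProdSucc (b : ℕ) : Measurable (IicProdSucc (X := X) b) := by
  refine measurable_pi_lambda _ fun i => ?_
  obtain ⟨i, hi⟩ := i
  by_cases h : i ≤ b
  · simp only [IicProdSucc, dif_pos h]
    exact (measurable_pi_apply _).comp measurable_fst
  · have he : i = b + 1 := Nat.le_antisymm (Finset.mem_Iic.1 hi) (Nat.lt_of_not_le h)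
    subst he
    simp only [IicProdSucc, dif_neg h]
    exact measurable_snd

lemma frestrictLe₂_iicProdSucc (b : ℕ) (p : (Π i : Finset.Iic b, X i) × X (b + 1)) :
    frestrictLe₂ (π := X) (Nat.le_succ b) (IicProdSucc b p) = p.1 := by
  funext i
  exact dif_pos (Finset.mem_Iic.1 i.2)

lemma kmap_map {α β γ δ : Type*} [MeasurableSpace α] [MeasurableSpace β] [MeasurableSpace γ]
    [MeasurableSpace δ] (κ : Kernel α β) {f : β → γ} {g : γ → δ}
    (hf : Measurable f) (hg : Measurable g) : (κ.map f).map g = κ.map (g ∘ f) := by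
  ext a s hs
  rw [Kernel.map_apply' _ hg _ hs, Kernel.map_apply' _ hf _ (hg hs),
    Kernel.map_apply' _ (hg.comp hf) _ hs, Set.preimage_comp]

variable (κ : ∀ n, Kernel (Π i : Finset.Iic n, X i) (X (n + 1)))

lemma partialTraj_zero (a : ℕ) :
    partialTraj κ a 0
      = Kernel.deterministic (frestrictLe₂ (Nat.zero_le a)) (measurable_frestrictLe₂ _) := rfl

lemma partialTraj_le {b a : ℕ} (hba : b ≤ a) :
    partialTraj κ a b = Kernel.deterministic (frestrictLe₂ hba) (measurable_frestrictLe₂ _) := by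
  cases b with
  | zero => rfl
  | succ b => simp only [partialTraj, dif_pos hba]

lemma partialTraj_succ_of_le {a b : ℕ} (hab : a ≤ b) :
    partialTraj κ a (b + 1)
      = ((Kernel.id ×ₖ κ b) ∘ₖ partialTraj κ a b).map (IicProdSucc b) := by
  simp only [partialTraj, dif_neg (by omega : ¬ b + 1 ≤ a)]

variable [∀ n, IsMarkovKernel (κ n)]

instance (a b : ℕ) : IsMarkovKernel (partialTraj κ a b) := by
  induction b with
  | zero => rw [partialTraj_zero]; infer_instance
  | succ b ih =>
    rw [partialTraj]
    split_ifs with h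
    · infer_instance
    · exact Kernel.IsMarkovKernel.map _ (measurable_iicProdSucc b)

lemma partialTraj_self (a : ℕ) : partialTraj (X := X) κ a a = Kernel.id := by
  rw [partialTraj_le κ le_rfl]; rfl

lemma partialTraj_map_step (a c : ℕ) :
    (partialTraj κ a (c + 1)).map (frestrictLe₂ (Nat.le_succ c)) = partialTraj κ a c := by
  by_cases h : c + 1 ≤ a
  · rw [partialTraj_le κ h, partialTraj_le κ (Nat.le_of_succ_le h)]
    ext x s hs
    rw [Kernel.map_apply' _ (measurable_frestrictLe₂ _) _ hs,
      Kernel.deterministic_apply' _ _ ((measurable_frestrictLe₂ _) hs),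
      Kernel.deterministic_apply' _ _ hs]
    rfl
  · rw [partialTraj_succ_of_le κ (by omega),
      kmap_map _ (measurable_iicProdSucc _) (measurable_frestrictLe₂ _),
      show frestrictLe₂ (π := X) (Nat.le_succ c) ∘ IicProdSucc c = Prod.fst from
        funext (frestrictLe₂_iicProdSucc c),
      Kernel.map_comp, ← Kernel.fst_eq, Kernel.fst_prod, Kernel.id_comp]

lemma partialTraj_map_frestrictLe₂ (a : ℕ) {b c : ℕ} (hbc : b ≤ c) :
    (partialTraj κ a c).map (frestrictLe₂ hbc) = partialTraj κ a b := by
  induction c with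
  | zero =>
    have hb : b = 0 := Nat.le_zero.1 hbc
    subst hb
    rw [show frestrictLe₂ (π := X) hbc = id from rfl, Kernel.map_id]
  | succ c ih =>
    rcases Nat.eq_or_lt_of_le hbc with h | h
    · subst h
      rw [show frestrictLe₂ (π := X) hbc = id from rfl, Kernel.map_id]
    · have hbc' : b ≤ c := Nat.lt_succ_iff.1 h
      rw [show frestrictLe₂ (π := X) hbc
            = frestrictLe₂ hbc' ∘ frestrictLe₂ (Nat.le_succ c) from rfl,
        ← kmap_map _ (measurable_frestrictLe₂ _) (measurable_frestrictLe₂ _),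
        partialTraj_map_step, ih hbc']

lemma partialTraj_comp {a c : ℕ} (hac : a ≤ c) (b : ℕ) :
    partialTraj κ c b ∘ₖ partialTraj κ a c = partialTraj κ a b := by
  induction b with
  | zero =>
    rw [partialTraj_zero, Kernel.deterministic_comp_eq_map,
      partialTraj_map_frestrictLe₂ κ a (Nat.zero_le c)]
  | succ b ih =>
    by_cases h : b + 1 ≤ c
    · rw [partialTraj_le κ h, Kernel.deterministic_comp_eq_map,
        partialTraj_map_frestrictLe₂ κ a h]
    · have hcb : c ≤ b := by omega
      rw [partialTraj_succ_of_le κ hcb, partialTraj_succ_of_le κ (hac.trans hcb),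
        ← Kernel.map_comp, Kernel.comp_assoc, ih]


lemma lintegral_partialTraj_succ_self (k : ℕ) (y : Π i : Finset.Iic k, X i)
    {f : (Π i : Finset.Iic (k + 1), X i) → ℝ≥0∞} (hf : Measurable f) :
    ∫⁻ w, f w ∂(partialTraj κ k (k + 1) y)
      = ∫⁻ z, f (IicProdSucc k (y, z)) ∂(κ k y) := by
  rw [partialTraj_succ_of_le κ le_rfl, partialTraj_self, Kernel.comp_id,
    Kernel.map_apply _ (measurable_iicProdSucc _),
    lintegral_map hf (measurable_iicProdSucc _), Kernel.prod_apply, Kernel.id_apply,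
    Measure.dirac_prod]
  exact MeasureTheory.lintegral_map (hf.comp (measurable_iicProdSucc _))
    measurable_prodMk_left

lemma partialTraj_apply_eq_lintegral (k b : ℕ) (y : Π i : Finset.Iic k, X i)
    {S : Set (Π i : Finset.Iic b, X i)} (hS : MeasurableSet S) :
    partialTraj κ k b y S
      = ∫⁻ z, partialTraj κ (k + 1) b (IicProdSucc k (y, z)) S ∂(κ k y) := by
  rw [← partialTraj_comp κ (Nat.le_succ k) b, Kernel.comp_apply' _ _ _ hS,
    lintegral_partialTraj_succ_self κ k y (Kernel.measurable_coe _ hS)]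

section Nonempty

variable [∀ n, Nonempty (X n)]

/-- Extend a finite trajectory to a full trajectory, arbitrarily. -/
noncomputable def extend (b : ℕ) (y : Π i : Finset.Iic b, X i) : Π n, X n :=
  fun n => if h : n ≤ b then y ⟨n, Finset.mem_Iic.2 h⟩ else Classical.arbitrary _

lemma frestrictLe_extend (b : ℕ) (y : Π i : Finset.Iic b, X i) :
    frestrictLe b (extend b y) = y := by
  funext i
  exact dif_pos (Finset.mem_Iic.1 i.2)

lemma frestrictLe₂_frestrictLe {b c : ℕ} (hbc : b ≤ c) (ω : Π n, X n) :
    frestrictLe₂ (π := X) hbc (frestrictLe c ω) = frestrictLe b ω := rfl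

lemma cylinder_subset_iff {b c : ℕ} (hbc : b ≤ c) {S : Set (Π i : Finset.Iic b, X i)}
    {T : Set (Π i : Finset.Iic c, X i)} :
    frestrictLe c ⁻¹' T ⊆ frestrictLe b ⁻¹' S ↔ T ⊆ frestrictLe₂ (π := X) hbc ⁻¹' S := by
  constructor
  · intro h w hw
    have h1 : extend c w ∈ frestrictLe c ⁻¹' T := by
      rw [Set.mem_preimage, frestrictLe_extend]; exact hw
    have h2 := h h1
    rw [Set.mem_preimage, ← frestrictLe₂_frestrictLe hbc, frestrictLe_extend] at h2
    exact h2
  · intro h ω hω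
    exact Set.mem_preimage.2 (frestrictLe₂_frestrictLe hbc ω ▸ h hω)

lemma cylinder_up {b c : ℕ} (hbc : b ≤ c) (S : Set (Π i : Finset.Iic b, X i)) :
    frestrictLe b ⁻¹' S = frestrictLe c ⁻¹' (frestrictLe₂ (π := X) hbc ⁻¹' S) := by
  ext ω
  simp [Set.mem_preimage, frestrictLe₂_frestrictLe hbc ω]

/-- Cylinder sets over initial segments. -/
def IsCyl (t : Set (Π n, X n)) : Prop :=
  ∃ b S, MeasurableSet S ∧ t = frestrictLe b ⁻¹' S

lemma IsCyl.up {t : Set (Π n, X n)} (h : IsCyl t) (d : ℕ) :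
    ∃ c S, d ≤ c ∧ MeasurableSet S ∧ t = frestrictLe c ⁻¹' S := by
  obtain ⟨b, S, hS, rfl⟩ := h
  rcases le_total b d with hbd | hdb
  · exact ⟨d, _, le_rfl, measurable_frestrictLe₂ hbd hS, cylinder_up hbd S⟩
  · exact ⟨b, S, hdb, hS, rfl⟩

lemma IsCyl.diff {s t : Set (Π n, X n)} (hs : IsCyl s) (ht : IsCyl t) : IsCyl (s \ t) := by
  obtain ⟨b, S, hS, rfl⟩ := hs
  obtain ⟨c, T, hcb, hT, rfl⟩ := ht.up b
  rw [cylinder_up hcb S]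
  exact ⟨c, _, (measurable_frestrictLe₂ hcb hS).diff hT, rfl⟩

lemma IsCyl.inter {s t : Set (Π n, X n)} (hs : IsCyl s) (ht : IsCyl t) : IsCyl (s ∩ t) := by
  obtain ⟨b, S, hS, rfl⟩ := hs
  obtain ⟨c, T, hcb, hT, rfl⟩ := ht.up b
  rw [cylinder_up hcb S]
  exact ⟨c, _, (measurable_frestrictLe₂ hcb hS).inter hT, rfl⟩

variable (a : ℕ) (x : Π i : Finset.Iic a, X i)

/-- The outer content associated to the family of partial trajectory measures. -/
noncomputable def mu0 (t : Set (Π n, X n)) : ℝ≥0∞ :=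
  ⨅ (b : ℕ) (S : Set (Π i : Finset.Iic b, X i)) (_ : MeasurableSet S)
    (_ : t ⊆ frestrictLe b ⁻¹' S), partialTraj κ a b x S

lemma mu0_le {t : Set (Π n, X n)} {b : ℕ} {S : Set (Π i : Finset.Iic b, X i)}
    (hS : MeasurableSet S) (hsub : t ⊆ frestrictLe b ⁻¹' S) :
    mu0 κ a x t ≤ partialTraj κ a b x S :=
  iInf_le_of_le b (iInf_le_of_le S (iInf_le_of_le hS (iInf_le _ hsub)))

lemma mu0_mono {s t : Set (Π n, X n)} (hst : s ⊆ t) : mu0 κ a x s ≤ mu0 κ a x t := by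
  refine le_iInf fun b => le_iInf fun S => le_iInf fun hS => le_iInf fun hsub => ?_
  exact mu0_le κ a x hS (hst.trans hsub)

lemma partialTraj_preimage {b d : ℕ} (hbd : b ≤ d) {S : Set (Π i : Finset.Iic b, X i)}
    (hS : MeasurableSet S) :
    partialTraj κ a d x (frestrictLe₂ (π := X) hbd ⁻¹' S) = partialTraj κ a b x S := by
  rw [← partialTraj_map_frestrictLe₂ κ a hbd,
    Kernel.map_apply' _ (measurable_frestrictLe₂ _) _ hS]

lemma mu0_cyl {b : ℕ} {S : Set (Π i : Finset.Iic b, X i)} (hS : MeasurableSet S) :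
    mu0 κ a x (frestrictLe b ⁻¹' S) = partialTraj κ a b x S := by
  refine le_antisymm (mu0_le κ a x hS subset_rfl) ?_
  refine le_iInf fun c => le_iInf fun T => le_iInf fun hT => le_iInf fun hsub => ?_
  rcases le_total b c with hbc | hcb
  · rw [cylinder_up hbc S] at hsub
    rw [← partialTraj_preimage κ a x hbc hS]
    exact measure_mono ((cylinder_subset_iff le_rfl).1 hsub)
  · rw [cylinder_up hcb T, cylinder_subset_iff le_rfl] at hsub
    rw [← partialTraj_preimage κ a x hcb hT]
    exact measure_mono hsub

lemma mu0_empty : mu0 κ a x ∅ = 0 := by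
  have h : (∅ : Set (Π n, X n)) = frestrictLe 0 ⁻¹' (∅ : Set (Π i : Finset.Iic 0, X i)) := by
    simp
  rw [h, mu0_cyl κ a x MeasurableSet.empty]
  simp

lemma mu0_univ : mu0 κ a x Set.univ = 1 := by
  have h : (Set.univ : Set (Π n, X n))
      = frestrictLe 0 ⁻¹' (Set.univ : Set (Π i : Finset.Iic 0, X i)) := by simp
  rw [h, mu0_cyl κ a x MeasurableSet.univ]
  exact measure_univ

lemma mu0_le_one (t : Set (Π n, X n)) : mu0 κ a x t ≤ 1 := by
  rw [← mu0_univ κ a x]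
  exact mu0_mono κ a x (Set.subset_univ t)

lemma exists_cover {t : Set (Π n, X n)} {ε : ℝ≥0∞} (hε : ε ≠ 0) :
    ∃ b S, MeasurableSet S ∧ t ⊆ frestrictLe b ⁻¹' S ∧
      partialTraj κ a b x S ≤ mu0 κ a x t + ε := by
  have hlt : mu0 κ a x t < mu0 κ a x t + ε :=
    ENNReal.lt_add_right ((mu0_le_one κ a x t).trans_lt ENNReal.one_lt_top).ne hε
  conv_lhs at hlt => rw [mu0]
  simp only [iInf_lt_iff] at hlt
  obtain ⟨b, S, hS, hsub, hval⟩ := hlt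
  exact ⟨b, S, hS, hsub, hval.le⟩

lemma mu0_union_le (s t : Set (Π n, X n)) :
    mu0 κ a x (s ∪ t) ≤ mu0 κ a x s + mu0 κ a x t := by
  refine ENNReal.le_of_forall_pos_le_add fun ε hε hfin => ?_
  have hε2 : ((ε : ℝ≥0∞) / 2) ≠ 0 := by
    simp [ENNReal.div_eq_top, (ENNReal.coe_pos.2 hε).ne']
  obtain ⟨b, S, hS, hsubS, hvS⟩ := exists_cover κ a x (t := s) hε2
  obtain ⟨c, T, hT, hsubT, hvT⟩ := exists_cover κ a x (t := t) hε2
  rcases le_total b c with hbc | hcb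
  · have hsub : s ∪ t ⊆ frestrictLe c ⁻¹' (frestrictLe₂ (π := X) hbc ⁻¹' S ∪ T) := by
      rw [Set.preimage_union, ← cylinder_up hbc]
      exact Set.union_subset_union hsubS hsubT
    calc mu0 κ a x (s ∪ t)
        ≤ partialTraj κ a c x (frestrictLe₂ (π := X) hbc ⁻¹' S ∪ T) :=
          mu0_le κ a x ((measurable_frestrictLe₂ hbc hS).union hT) hsub
      _ ≤ partialTraj κ a c x (frestrictLe₂ (π := X) hbc ⁻¹' S) + partialTraj κ a c x T :=
          measure_union_le _ _
      _ = partialTraj κ a b x S + partialTraj κ a c x T := by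
          rw [partialTraj_preimage κ a x hbc hS]
      _ ≤ (mu0 κ a x s + ε / 2) + (mu0 κ a x t + ε / 2) := add_le_add hvS hvT
      _ = mu0 κ a x s + mu0 κ a x t + ε := by
          rw [add_add_add_comm, ENNReal.add_halves]
  · have hsub : s ∪ t ⊆ frestrictLe b ⁻¹' (S ∪ frestrictLe₂ (π := X) hcb ⁻¹' T) := by
      rw [Set.preimage_union, ← cylinder_up hcb]
      exact Set.union_subset_union hsubS hsubT
    calc mu0 κ a x (s ∪ t)
        ≤ partialTraj κ a b x (S ∪ frestrictLe₂ (π := X) hcb ⁻¹' T) :=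
          mu0_le κ a x (hS.union (measurable_frestrictLe₂ hcb hT)) hsub
      _ ≤ partialTraj κ a b x S + partialTraj κ a b x (frestrictLe₂ (π := X) hcb ⁻¹' T) :=
          measure_union_le _ _
      _ = partialTraj κ a b x S + partialTraj κ a c x T := by
          rw [partialTraj_preimage κ a x hcb hT]
      _ ≤ (mu0 κ a x s + ε / 2) + (mu0 κ a x t + ε / 2) := add_le_add hvS hvT
      _ = mu0 κ a x s + mu0 κ a x t + ε := by
          rw [add_add_add_comm, ENNReal.add_halves]

lemma mu0_caratheodory {b : ℕ} {S : Set (Π i : Finset.Iic b, X i)} (hS : MeasurableSet S)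
    (t : Set (Π n, X n)) :
    mu0 κ a x (t ∩ frestrictLe b ⁻¹' S) + mu0 κ a x (t \ frestrictLe b ⁻¹' S)
      ≤ mu0 κ a x t := by
  refine le_iInf fun c => le_iInf fun T => le_iInf fun hT => le_iInf fun hsub => ?_
  rcases le_total b c with hbc | hcb
  · set S' : Set (Π i : Finset.Iic c, X i) := frestrictLe₂ (π := X) hbc ⁻¹' S with hS'def
    have hS' : MeasurableSet S' := measurable_frestrictLe₂ hbc hS
    have hcylS : frestrictLe b ⁻¹' S = frestrictLe c ⁻¹' S' := cylinder_up hbc S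
    have h1 : mu0 κ a x (t ∩ frestrictLe b ⁻¹' S) ≤ partialTraj κ a c x (T ∩ S') := by
      refine mu0_le κ a x (hT.inter hS') ?_
      rw [Set.preimage_inter, ← hcylS]
      exact Set.inter_subset_inter hsub subset_rfl
    have h2 : mu0 κ a x (t \ frestrictLe b ⁻¹' S) ≤ partialTraj κ a c x (T \ S') := by
      refine mu0_le κ a x (hT.diff hS') ?_
      rw [Set.preimage_diff, ← hcylS]
      exact Set.diff_subset_diff hsub subset_rfl
    calc mu0 κ a x (t ∩ frestrictLe b ⁻¹' S) + mu0 κ a x (t \ frestrictLe b ⁻¹' S)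
        ≤ partialTraj κ a c x (T ∩ S') + partialTraj κ a c x (T \ S') := add_le_add h1 h2
      _ = partialTraj κ a c x T := measure_inter_add_diff T hS'
  · -- b ≥ c : lift T to level b
    have hcylT : frestrictLe c ⁻¹' T = frestrictLe b ⁻¹' (frestrictLe₂ (π := X) hcb ⁻¹' T) :=
      cylinder_up hcb T
    set T' : Set (Π i : Finset.Iic b, X i) := frestrictLe₂ (π := X) hcb ⁻¹' T with hT'def
    have hT' : MeasurableSet T' := measurable_frestrictLe₂ hcb hT
    have h1 : mu0 κ a x (t ∩ frestrictLe b ⁻¹' S) ≤ partialTraj κ a b x (T' ∩ S) := by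
      refine mu0_le κ a x (hT'.inter hS) ?_
      rw [Set.preimage_inter, ← hcylT]
      exact Set.inter_subset_inter hsub subset_rfl
    have h2 : mu0 κ a x (t \ frestrictLe b ⁻¹' S) ≤ partialTraj κ a b x (T' \ S) := by
      refine mu0_le κ a x (hT'.diff hS) ?_
      rw [Set.preimage_diff, ← hcylT]
      exact Set.diff_subset_diff hsub subset_rfl
    calc mu0 κ a x (t ∩ frestrictLe b ⁻¹' S) + mu0 κ a x (t \ frestrictLe b ⁻¹' S)
        ≤ partialTraj κ a b x (T' ∩ S) + partialTraj κ a b x (T' \ S) := add_le_add h1 h2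
      _ = partialTraj κ a b x T' := measure_inter_add_diff T' hS
      _ = partialTraj κ a c x T := partialTraj_preimage κ a x hcb hT

lemma iInf_mu0_eq_zero {A : ℕ → Set (Π n, X n)} (hA : ∀ n, IsCyl (A n)) (hanti : Antitone A)
    (hempty : ⋂ n, A n = ∅) : ⨅ n, mu0 κ a x (A n) = 0 := by
  by_contra hne
  choose b S hSm hSe using hA
  set F : (n : ℕ) → (k : ℕ) → (Π i : Finset.Iic k, X i) → ℝ≥0∞ :=
    fun n k y => partialTraj κ k (b n) y (S n) with hF
  have Fmeas : ∀ n k, Measurable (F n k) := fun n k => Kernel.measurable_coe _ (hSm n)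
  have Fle : ∀ n k (y : Π i : Finset.Iic k, X i), F n k y ≤ 1 := fun n k y => prob_le_one
  have Fanti : ∀ k (y : Π i : Finset.Iic k, X i), Antitone fun n => F n k y := by
    intro k y
    refine antitone_nat_of_succ_le fun n => ?_
    have hsub := hanti (Nat.le_succ n)
    rw [hSe n, hSe (n + 1)] at hsub
    have h1 : b n ≤ max (b n) (b (n + 1)) := le_max_left _ _
    have h2 : b (n + 1) ≤ max (b n) (b (n + 1)) := le_max_right _ _
    rw [cylinder_up h2 (S (n + 1))] at hsub
    have hsub' := (cylinder_subset_iff h1).1 hsub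
    calc F (n + 1) k y
        = partialTraj κ k _ y (frestrictLe₂ (π := X) h2 ⁻¹' S (n + 1)) :=
          (partialTraj_preimage κ k y h2 (hSm _)).symm
      _ ≤ partialTraj κ k _ y (frestrictLe₂ (π := X) h1 ⁻¹' S n) := measure_mono hsub'
      _ = F n k y := partialTraj_preimage κ k y h1 (hSm _)
  set G : (k : ℕ) → (Π i : Finset.Iic k, X i) → ℝ≥0∞ := fun k y => ⨅ n, F n k y with hG
  have Gmeas : ∀ k, Measurable (G k) := fun k => Measurable.iInf fun n => Fmeas n k
  have Gle : ∀ k (y : Π i : Finset.Iic k, X i), G k y ≤ 1 := fun k y =>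
    (iInf_le _ 0).trans (Fle 0 k y)
  have Gstep : ∀ k (y : Π i : Finset.Iic k, X i),
      G k y = ∫⁻ z, G (k + 1) (IicProdSucc k (y, z)) ∂(κ k y) := by
    intro k y
    have h1 : ∀ n, F n k y = ∫⁻ z, F n (k + 1) (IicProdSucc k (y, z)) ∂(κ k y) :=
      fun n => partialTraj_apply_eq_lintegral κ k (b n) y (hSm n)
    calc G k y = ⨅ n, ∫⁻ z, F n (k + 1) (IicProdSucc k (y, z)) ∂(κ k y) := iInf_congr h1
      _ = ∫⁻ z, ⨅ n, F n (k + 1) (IicProdSucc k (y, z)) ∂(κ k y) := by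
          refine (lintegral_iInf
            (fun n => (Fmeas n (k + 1)).comp
              ((measurable_iicProdSucc k).comp measurable_prodMk_left))
            (fun m n hmn z => Fanti (k + 1) _ hmn) ?_).symm
          refine ne_of_lt (lt_of_le_of_lt ?_ ENNReal.one_lt_top)
          calc ∫⁻ z, F 0 (k + 1) (IicProdSucc k (y, z)) ∂(κ k y)
              ≤ ∫⁻ _, 1 ∂(κ k y) := lintegral_mono fun z => Fle 0 _ _
            _ = 1 := by simp
  have Gchoice : ∀ k (y : Π i : Finset.Iic k, X i),
      ∃ z, G k y ≤ G (k + 1) (IicProdSucc k (y, z)) := by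
    intro k y
    by_contra h
    push_neg at h
    have hμ : (κ k y : Measure (X (k + 1))) ≠ 0 := by
      intro h0
      have h1 := measure_univ (μ := κ k y)
      rw [h0] at h1
      simp at h1
    have hfi : ∫⁻ z, G (k + 1) (IicProdSucc k (y, z)) ∂(κ k y) ≠ ∞ := by
      rw [← Gstep k y]
      exact ((Gle k y).trans_lt ENNReal.one_lt_top).ne
    have hlt := lintegral_strict_mono hμ measurable_const.aemeasurable hfi (ae_of_all _ h)
    rw [lintegral_const, measure_univ, mul_one, ← Gstep k y] at hlt
    exact lt_irrefl _ hlt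
  set ε := ⨅ n, mu0 κ a x (A n) with hε
  have hε0 : ε ≠ 0 := hne
  have hGa : ε ≤ G a x := by
    refine le_iInf fun n => ?_
    have h1 : mu0 κ a x (A n) = F n a x := by
      rw [hSe n, mu0_cyl κ a x (hSm n)]
    exact (iInf_le _ n).trans_eq h1
  let q : (j : ℕ) → {y : Π i : Finset.Iic (a + j), X i // ε ≤ G (a + j) y} :=
    fun j => Nat.rec ⟨x, hGa⟩ (fun j p =>
      ⟨IicProdSucc (a + j) (p.1, Classical.choose (Gchoice (a + j) p.1)),
        p.2.trans (Classical.choose_spec (Gchoice (a + j) p.1))⟩) j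
  have qsucc : ∀ j, (q (j + 1)).1
      = IicProdSucc (a + j) ((q j).1, Classical.choose (Gchoice (a + j) (q j).1)) :=
    fun j => rfl
  have qcoh : ∀ (j j' : ℕ), j ≤ j' → ∀ (i : ℕ) (hij : i ≤ a + j) (hij' : i ≤ a + j'),
      (q j').1 ⟨i, Finset.mem_Iic.2 hij'⟩ = (q j).1 ⟨i, Finset.mem_Iic.2 hij⟩ := by
    intro j j' h
    induction j', h using Nat.le_induction with
    | base => intro i hij hij'; rfl
    | succ m hm ih =>
      intro i hij hij'
      have him : i ≤ a + m := by omega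
      have h1 : (q (m + 1)).1 ⟨i, Finset.mem_Iic.2 hij'⟩ = (q m).1 ⟨i, Finset.mem_Iic.2 him⟩ := by
        rw [qsucc m]
        exact dif_pos him
      rw [h1, ih i hij him]
  set ω : (n : ℕ) → X n := fun n => (q (n - a)).1 ⟨n, Finset.mem_Iic.2 (by omega)⟩ with hω
  have hprefix : ∀ j, frestrictLe (a + j) ω = (q j).1 := by
    intro j
    funext i
    obtain ⟨i, hi⟩ := i
    have hi' : i ≤ a + j := Finset.mem_Iic.1 hi
    show ω i = (q j).1 ⟨i, hi⟩
    rw [hω]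
    exact (qcoh (i - a) j (by omega) i (by omega) hi').symm
  have hmem : ∀ n, ω ∈ A n := by
    intro n
    have hk : b n ≤ a + b n := Nat.le_add_left _ _
    have h1 : ε ≤ F n (a + b n) (frestrictLe (a + b n) ω) := by
      rw [hprefix (b n)]
      exact (q (b n)).2.trans (iInf_le _ n)
    rw [hF] at h1
    simp only at h1
    rw [partialTraj_le κ hk,
      Kernel.deterministic_apply' (measurable_frestrictLe₂ _) _ (hSm n)] at h1
    have hmem' : frestrictLe₂ (π := X) hk (frestrictLe (a + b n) ω) ∈ S n := by
      by_contra hnot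
      rw [Set.indicator_of_notMem hnot] at h1
      exact hε0 (le_zero_iff.1 h1)
    rw [frestrictLe₂_frestrictLe hk ω] at hmem'
    rw [hSe n]
    exact hmem'
  have hcontra : ω ∈ ⋂ n, A n := Set.mem_iInter.2 hmem
  rw [hempty] at hcontra
  exact absurd hcontra (Set.notMem_empty ω)

/-- The outer measure extending `mu0`. -/
noncomputable def outerM : OuterMeasure (Π n, X n) :=
  OuterMeasure.ofFunction (mu0 κ a x) (mu0_empty κ a x)

lemma mu0_biUnion_lt_le (t : ℕ → Set (Π n, X n)) (n : ℕ) :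
    mu0 κ a x (⋃ i, ⋃ (_ : i < n), t i) ≤ ∑ i ∈ Finset.range n, mu0 κ a x (t i) := by
  induction n with
  | zero => simp [mu0_empty κ a x]
  | succ n ih =>
    rw [Finset.sum_range_succ, Set.biUnion_lt_succ]
    exact (mu0_union_le κ a x _ _).trans (add_le_add ih le_rfl)

lemma outerM_cyl {b : ℕ} {S : Set (Π i : Finset.Iic b, X i)} (hS : MeasurableSet S) :
    outerM κ a x (frestrictLe b ⁻¹' S) = partialTraj κ a b x S := by
  refine le_antisymm ((OuterMeasure.ofFunction_le _).trans_eq (mu0_cyl κ a x hS)) ?_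
  rw [outerM, OuterMeasure.ofFunction_apply]
  refine le_iInf fun t => le_iInf fun hcov => ?_
  rw [← mu0_cyl κ a x hS]
  refine ENNReal.le_of_forall_pos_le_add fun ε hε hfin => ?_
  obtain ⟨δ, hδpos, hδsum⟩ :=
    ENNReal.exists_pos_sum_of_countable' (ENNReal.coe_pos.2 hε).ne' ℕ
  choose c T hT hsubT hvT using fun i => exists_cover κ a x (t := t i) (hδpos i).ne'
  set B : ℕ → Set (Π n, X n) := fun i => frestrictLe (c i) ⁻¹' T i with hB
  have hBcyl : ∀ i, IsCyl (B i) := fun i => ⟨c i, T i, hT i, rfl⟩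
  have hmuB : ∀ i, mu0 κ a x (B i) ≤ mu0 κ a x (t i) + δ i := fun i =>
    le_of_eq_of_le (mu0_cyl κ a x (hT i)) (hvT i)
  set D : ℕ → Set (Π n, X n) := fun m => frestrictLe b ⁻¹' S \ ⋃ i, ⋃ (_ : i < m), B i with hD
  have hDcyl : ∀ m, IsCyl (D m) := by
    intro m
    induction m with
    | zero =>
      have h0 : D 0 = frestrictLe b ⁻¹' S := by simp [hD]
      rw [h0]
      exact ⟨b, S, hS, rfl⟩
    | succ m ih =>
      have h1 : D (m + 1) = D m \ B m := by
        rw [hD]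
        simp only [Set.biUnion_lt_succ, ← Set.diff_diff]
      rw [h1]
      exact ih.diff (hBcyl m)
  have hDanti : Antitone D := by
    intro p q hpq
    refine Set.diff_subset_diff_right ?_
    exact Set.biUnion_subset_biUnion_left fun i hi => lt_of_lt_of_le hi hpq
  have hDempty : ⋂ m, D m = ∅ := by
    ext ω
    simp only [Set.mem_iInter, Set.mem_empty_iff_false, iff_false]
    intro hall
    have hω1 : ω ∈ frestrictLe b ⁻¹' S := (hall 0).1
    obtain ⟨i, hi⟩ := Set.mem_iUnion.1 (hcov hω1)
    exact (hall (i + 1)).2 (Set.mem_biUnion (Nat.lt_succ_self i) (hsubT i hi))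
  have hDinf := iInf_mu0_eq_zero κ a x hDcyl hDanti hDempty
  have key : ∀ m, mu0 κ a x (frestrictLe b ⁻¹' S)
      ≤ mu0 κ a x (D m) + (∑' i, mu0 κ a x (t i) + ε) := by
    intro m
    have hsub : frestrictLe b ⁻¹' S ⊆ D m ∪ ⋃ i, ⋃ (_ : i < m), B i := fun ω hω => by
      by_cases h : ω ∈ ⋃ i, ⋃ (_ : i < m), B i
      · exact Or.inr h
      · exact Or.inl ⟨hω, h⟩
    calc mu0 κ a x (frestrictLe b ⁻¹' S)
        ≤ mu0 κ a x (D m ∪ ⋃ i, ⋃ (_ : i < m), B i) := mu0_mono κ a x hsub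
      _ ≤ mu0 κ a x (D m) + mu0 κ a x (⋃ i, ⋃ (_ : i < m), B i) := mu0_union_le κ a x _ _
      _ ≤ mu0 κ a x (D m) + ∑ i ∈ Finset.range m, mu0 κ a x (B i) :=
          add_le_add le_rfl (mu0_biUnion_lt_le κ a x B m)
      _ ≤ mu0 κ a x (D m) + ∑ i ∈ Finset.range m, (mu0 κ a x (t i) + δ i) :=
          add_le_add le_rfl (Finset.sum_le_sum fun i _ => hmuB i)
      _ ≤ mu0 κ a x (D m) + (∑' i, mu0 κ a x (t i) + ε) := by
          refine add_le_add le_rfl ?_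
          rw [Finset.sum_add_distrib]
          exact add_le_add (ENNReal.sum_le_tsum _) ((ENNReal.sum_le_tsum _).trans hδsum.le)
  calc mu0 κ a x (frestrictLe b ⁻¹' S)
      ≤ ⨅ m, (mu0 κ a x (D m) + (∑' i, mu0 κ a x (t i) + ε)) := le_iInf key
    _ = (⨅ m, mu0 κ a x (D m)) + (∑' i, mu0 κ a x (t i) + ε) := ENNReal.iInf_add.symm
    _ = ∑' i, mu0 κ a x (t i) + ε := by rw [hDinf, zero_add]

lemma isCaratheodory_cyl {b : ℕ} {S : Set (Π i : Finset.Iic b, X i)} (hS : MeasurableSet S) :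
    (outerM κ a x).IsCaratheodory (frestrictLe b ⁻¹' S) := by
  refine (OuterMeasure.isCaratheodory_iff_le' _).2 fun t => ?_
  conv_rhs => rw [outerM, OuterMeasure.ofFunction_apply]
  refine le_iInf fun u => le_iInf fun hcov => ?_
  have h1 : outerM κ a x (t ∩ frestrictLe b ⁻¹' S)
      ≤ ∑' i, mu0 κ a x (u i ∩ frestrictLe b ⁻¹' S) := by
    refine le_trans (measure_mono ?_) ((measure_iUnion_le _).trans
      (ENNReal.tsum_le_tsum fun i => OuterMeasure.ofFunction_le _))
    exact fun ω hω => Set.mem_iUnion.2 (by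
      obtain ⟨i, hi⟩ := Set.mem_iUnion.1 (hcov hω.1)
      exact ⟨i, hi, hω.2⟩)
  have h2 : outerM κ a x (t \ frestrictLe b ⁻¹' S)
      ≤ ∑' i, mu0 κ a x (u i \ frestrictLe b ⁻¹' S) := by
    refine le_trans (measure_mono ?_) ((measure_iUnion_le _).trans
      (ENNReal.tsum_le_tsum fun i => OuterMeasure.ofFunction_le _))
    exact fun ω hω => Set.mem_iUnion.2 (by
      obtain ⟨i, hi⟩ := Set.mem_iUnion.1 (hcov hω.1)
      exact ⟨i, hi, hω.2⟩)
  calc outerM κ a x (t ∩ frestrictLe b ⁻¹' S) + outerM κ a x (t \ frestrictLe b ⁻¹' S)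
      ≤ ∑' i, mu0 κ a x (u i ∩ frestrictLe b ⁻¹' S)
        + ∑' i, mu0 κ a x (u i \ frestrictLe b ⁻¹' S) := add_le_add h1 h2
    _ = ∑' i, (mu0 κ a x (u i ∩ frestrictLe b ⁻¹' S)
        + mu0 κ a x (u i \ frestrictLe b ⁻¹' S)) := ENNReal.tsum_add.symm
    _ ≤ ∑' i, mu0 κ a x (u i) := ENNReal.tsum_le_tsum fun i => mu0_caratheodory κ a x hS (u i)

end Nonempty

section Generate

lemma pi_eq_generateFrom [∀ n, Nonempty (X n)] :
    (inferInstance : MeasurableSpace (Π n, X n))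
      = MeasurableSpace.generateFrom {t | IsCyl (X := X) t} := by
  refine le_antisymm ?_ (MeasurableSpace.generateFrom_le ?_)
  · have hev : ∀ n, Measurable[MeasurableSpace.generateFrom {t | IsCyl (X := X) t}]
        fun (ω : Π n, X n) => ω n := by
      intro n
      have h1 : Measurable[MeasurableSpace.generateFrom {t | IsCyl (X := X) t}]
          (frestrictLe (π := X) n) := fun s hs =>
        MeasurableSpace.measurableSet_generateFrom ⟨n, s, hs, rfl⟩
      have h2 : (fun ω : Π n, X n => ω n)
          = (fun y : Π i : Finset.Iic n, X i => y ⟨n, Finset.mem_Iic.2 le_rfl⟩)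
            ∘ frestrictLe n := rfl
      rw [h2]
      exact (measurable_pi_apply _).comp h1
    exact iSup_le fun n => measurable_iff_comap_le.1 (hev n)
  · rintro t ⟨b, S, hS, rfl⟩
    exact measurable_frestrictLe b hS

end Generate

section Nonempty2

variable [∀ n, Nonempty (X n)] (a : ℕ) (x : Π i : Finset.Iic a, X i)

lemma pi_le_caratheodory :
    (inferInstance : MeasurableSpace (Π n, X n)) ≤ (outerM κ a x).caratheodory := by
  rw [pi_eq_generateFrom]
  refine MeasurableSpace.generateFrom_le ?_
  rintro t ⟨b, S, hS, rfl⟩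
  exact isCaratheodory_cyl κ a x hS

/-- The trajectory measure. -/
noncomputable def muM : Measure (Π n, X n) :=
  (outerM κ a x).toMeasure (pi_le_caratheodory κ a x)

lemma muM_cyl {b : ℕ} {S : Set (Π i : Finset.Iic b, X i)} (hS : MeasurableSet S) :
    muM κ a x (frestrictLe b ⁻¹' S) = partialTraj κ a b x S := by
  rw [muM, toMeasure_apply _ _ (measurable_frestrictLe b hS)]
  exact outerM_cyl κ a x hS

instance : IsProbabilityMeasure (muM κ a x) := by
  constructor
  have h : (Set.univ : Set (Π n, X n))
      = frestrictLe 0 ⁻¹' (Set.univ : Set (Π i : Finset.Iic 0, X i)) := by simp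
  rw [h, muM_cyl κ a x MeasurableSet.univ, measure_univ]

end Nonempty2

section Kernel

variable [∀ n, Nonempty (X n)]

/-- The Ionescu-Tulcea trajectory kernel. -/
noncomputable def trajKer (a : ℕ) : Kernel (Π i : Finset.Iic a, X i) (Π n, X n) where
  toFun := fun x => muM κ a x
  measurable' := by
    refine Measure.measurable_of_measurable_coe _ fun s hs => ?_
    refine MeasurableSpace.induction_on_inter
      (C := fun s _ => Measurable fun x => muM κ a x s)
      (pi_eq_generateFrom (X := X)) (fun s hs t ht _ => hs.inter ht)
      ?_ ?_ ?_ ?_ _ hs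
    · simpa using measurable_const
    · rintro t ⟨b, S, hS, rfl⟩
      have h : (fun x => muM κ a x (frestrictLe b ⁻¹' S))
          = fun x => partialTraj κ a b x S := funext fun x => muM_cyl κ a x hS
      rw [h]
      exact Kernel.measurable_coe _ hS
    · intro t ht iht
      have h : (fun x => muM κ a x tᶜ) = fun x => 1 - muM κ a x t :=
        funext fun x => by rw [measure_compl ht (measure_ne_top _ _), measure_univ]
      rw [h]
      exact measurable_const.sub iht
    · intro f hdisj hmeas ihf
      have h : (fun x => muM κ a x (⋃ i, f i)) = fun x => ∑' i, muM κ a x (f i) :=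
        funext fun x => measure_iUnion hdisj hmeas
      rw [h]
      exact Measurable.ennreal_tsum ihf

instance (a : ℕ) : IsMarkovKernel (trajKer κ a) :=
  ⟨fun x => by rw [show trajKer κ a x = muM κ a x from rfl]; infer_instance⟩

lemma trajKer_map (a b : ℕ) :
    (trajKer κ a).map (frestrictLe b) = partialTraj κ a b := by
  ext x s hs
  rw [Kernel.map_apply' _ (measurable_frestrictLe b) _ hs,
    show trajKer κ a x = muM κ a x from rfl, muM_cyl κ a x hs]

end Kernel

end ITAux

/-- The Ionescu-Tulcea trajectory kernels `ξ_a : Π i : Iic a, X i ⇝ Π n, X n` exist, and the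
pushforward of `ξ_a` under the restriction map `π_b` is the partial trajectory kernel
`η_{a,b}` for all `a b : ℕ`. -/
theorem exists_traj_map_frestrictLe (κ : ∀ n, Kernel (Π i : Finset.Iic n, X i) (X (n + 1)))
    [∀ n, IsMarkovKernel (κ n)] :
    ∃ ξ : ∀ a : ℕ, Kernel (Π i : Finset.Iic a, X i) (Π n, X n),
      (∀ a, IsMarkovKernel (ξ a)) ∧
      ∀ a b : ℕ, (ξ a).map (frestrictLe b) = partialTraj κ a b := by
  classical
  by_cases hne : ∀ n, Nonempty (X n)
  · haveI := hne
    exact ⟨fun a => ITAux.trajKer κ a, fun a => inferInstance,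
      fun a b => ITAux.trajKer_map κ a b⟩
  · push_neg at hne
    obtain ⟨n, hn⟩ := hne
    have h0 : IsEmpty (X 0) := by
      by_contra h0
      have hex : ∃ k, ¬ Nonempty (X k) := ⟨n, not_nonempty_iff.2 hn⟩
      obtain ⟨m', hm'⟩ : ∃ m', Nat.find hex = m' + 1 := by
        refine ⟨Nat.find hex - 1, ?_⟩
        have : Nat.find hex ≠ 0 := by
          intro h
          exact (h ▸ Nat.find_spec hex) (not_isEmpty_iff.1 h0)
        omega
      haveI hlt : ∀ i : Finset.Iic m', Nonempty (X i) := fun i =>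
        not_not.1 (Nat.find_min hex (by have := Finset.mem_Iic.1 i.2; omega))
      obtain ⟨y⟩ : Nonempty (Π i : Finset.Iic m', X i) := ⟨fun i => Classical.arbitrary _⟩
      haveI hem : IsEmpty (X (m' + 1)) := not_nonempty_iff.1 (hm' ▸ Nat.find_spec hex)
      have h1 := measure_univ (μ := κ m' y)
      rw [Set.univ_eq_empty_iff.2 hem] at h1
      simp at h1
    have hdom : ∀ a, IsEmpty (Π i : Finset.Iic a, X i) := fun a =>
      ⟨fun y => h0.false (y ⟨0, Finset.mem_Iic.2 (Nat.zero_le a)⟩)⟩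
    refine ⟨fun a => 0, fun a => ⟨fun x => ((hdom a).false x).elim⟩, fun a b => ?_⟩
    exact Kernel.ext fun x => ((hdom a).false x).elim
end
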